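/- If range(id − σ) = ker(id + τ), then σ and τ commute: σ ∘ τ = τ ∘ σ. -/

import Mathlib

/-- for selfadjoint `σ, τ` on a finite-dimensional complex inner product
space, if `range (id − σ) = ker (id + τ)` then `σ` and `τ` commute. -/
theorem range_ker_coupling_commute
    {W : Type*} [NormedAddCommGroup W] [InnerProductSpace ℂ W] [FiniteDimensional ℂ W]
    (σ τ : W →ₗ[ℂ] W) (hσ : σ.IsSymmetric) (hτ : τ.IsSymmetric)
    (h : LinearMap.range (LinearMap.id - σ) = LinearMap.ker (LinearMap.id + τ)) :
    σ ∘ₗ τ = τ ∘ₗ σ := by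
  set A : W →ₗ[ℂ] W := LinearMap.id - σ with hAdef
  set B : W →ₗ[ℂ] W := LinearMap.id + τ with hBdef
  have hBA : ∀ x : W, B (A x) = 0 := by
    intro x
    have hx : A x ∈ LinearMap.range A := LinearMap.mem_range_self _ x
    rw [h, LinearMap.mem_ker] at hx
    exact hx
  have hA : A.IsSymmetric := by
    intro x y
    simp [hAdef, inner_sub_left, inner_sub_right, hσ x y]
  have hB : B.IsSymmetric := by
    intro x y
    simp [hBdef, inner_add_left, inner_add_right, hτ x y]
  have hAB : ∀ x : W, A (B x) = 0 := by
    intro x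
    apply ext_inner_right ℂ
    intro y
    calc inner ℂ (A (B x)) y
        = inner ℂ (B x) (A y) := hA _ y
      _ = (inner ℂ x (B (A y)) : ℂ) := hB x _
      _ = (inner ℂ x (0 : W) : ℂ) := by rw [hBA y]
      _ = (inner ℂ (0 : W) y : ℂ) := by simp
  ext x
  have h1 := hBA x
  have h2 := hAB x
  simp only [hAdef, hBdef, LinearMap.add_apply, LinearMap.sub_apply, LinearMap.id_apply,
    map_sub, map_add] at h1 h2
  have e1 : τ (σ x) = x - σ x + τ x := by
    apply eq_of_sub_eq_zero
    calc τ (σ x) - (x - σ x + τ x) = -(x + τ x - (σ x + τ (σ x))) := by abel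
      _ = 0 := by rw [h1, neg_zero]
  have e2 : σ (τ x) = x + τ x - σ x := by
    apply eq_of_sub_eq_zero
    calc σ (τ x) - (x + τ x - σ x) = -(x - σ x + (τ x - σ (τ x))) := by abel
      _ = 0 := by rw [h2, neg_zero]
  simp only [LinearMap.comp_apply, e1, e2]
  abel
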